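/- arXiv:1305.5828 — 2 statements merged into one kernel-verified Lean document; each statement's English description precedes it below -/
import Mathlib

section
/- Let H, G be real Hilbert spaces, f ∈ Γ₀(H), L : H → G bounded linear, with 0 ∈ sri(ran L* − dom f*). Then ∂(L ▷ f) = L ▷ ∂f, i.e., the subdifferential of the infimal postcomposition equals the parallel composition of the subdifferential. -/
open scoped Pointwise RealInnerProductSpace

noncomputable section

/-- Inverse of a set-valued operator (graph reversal). -/
def SVInv {α β : Type*} (A : α → Set β) : β → Set α := fun u => {x | u ∈ A x}

/-- Range of a set-valued operator. -/
def SVRan {α β : Type*} (A : α → Set β) : Set β := ⋃ x, A x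

/-- Parallel sum of set-valued operators: `A □ B = (A⁻¹ + B⁻¹)⁻¹`. -/
def parSum {α : Type*} [Add α] (A B : α → Set α) : α → Set α :=
  SVInv fun u => SVInv A u + SVInv B u

/-- Parallel composition of `A` by `L`: `L ▷ A = (L ∘ A⁻¹ ∘ L*)⁻¹`. -/
def parComp {H G : Type*} [NormedAddCommGroup H] [InnerProductSpace ℝ H] [CompleteSpace H]
    [NormedAddCommGroup G] [InnerProductSpace ℝ G] [CompleteSpace G]
    (L : H →L[ℝ] G) (A : H → Set H) : G → Set G :=
  SVInv fun v => L '' SVInv A (ContinuousLinearMap.adjoint L v)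

/-- Monotonicity of a set-valued operator. -/
def IsMonotoneOp {H : Type*} [NormedAddCommGroup H] [InnerProductSpace ℝ H]
    (A : H → Set H) : Prop :=
  ∀ x y u v, u ∈ A x → v ∈ A y → (0:ℝ) ≤ ⟪x - y, u - v⟫

/-- Maximal monotonicity: no monotone operator has a strictly larger graph. -/
def IsMaxMonotoneOp {H : Type*} [NormedAddCommGroup H] [InnerProductSpace ℝ H]
    (A : H → Set H) : Prop :=
  IsMonotoneOp A ∧ ∀ B : H → Set H, IsMonotoneOp B → (∀ x, A x ⊆ B x) → B = A

/-- The cone generated by a set. -/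
def coneGen {H : Type*} [AddCommGroup H] [Module ℝ H] (D : Set H) : Set H :=
  {z | ∃ c : ℝ, 0 ≤ c ∧ ∃ y ∈ D, z = c • y}

/-- The cone generated by `D` is a closed vector subspace. -/
def IsClosedSubspaceCone {H : Type*} [NormedAddCommGroup H] [Module ℝ H]
    (D : Set H) : Prop :=
  ∃ S : Submodule ℝ H, IsClosed (S : Set H) ∧ coneGen D = ↑S

/-- Effective domain of an `EReal`-valued function. -/
def effDom {H : Type*} (f : H → EReal) : Set H := {x | f x ≠ ⊤}

/-- Properness. -/
def ProperFn {H : Type*} (f : H → EReal) : Prop := (∀ x, f x ≠ ⊥) ∧ ∃ x, f x ≠ ⊤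

/-- Convexity for `EReal`-valued functions. -/
def ConvexERealFn {H : Type*} [AddCommGroup H] [Module ℝ H] (f : H → EReal) : Prop :=
  ∀ x y : H, ∀ a b : ℝ, 0 ≤ a → 0 ≤ b → a + b = 1 →
    f (a • x + b • y) ≤ (a : EReal) * f x + (b : EReal) * f y

/-- The class `Γ₀`: proper, convex, lower semicontinuous. -/
def IsGamma0 {H : Type*} [NormedAddCommGroup H] [NormedSpace ℝ H] (f : H → EReal) : Prop :=
  ProperFn f ∧ ConvexERealFn f ∧ LowerSemicontinuous f

/-- Fenchel conjugate. -/
def fconj {H : Type*} [NormedAddCommGroup H] [InnerProductSpace ℝ H]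
    (f : H → EReal) (u : H) : EReal :=
  ⨆ x, ((⟪x, u⟫ : ℝ) : EReal) - f x

/-- Infimal convolution. -/
def infConv {H : Type*} [Sub H] (f g : H → EReal) (x : H) : EReal := ⨅ y, f (x - y) + g y

/-- Infimal postcomposition `(L ▷ f)(y) = inf {f x : L x = y}`. -/
def infPost {H G : Type*} [NormedAddCommGroup H] [NormedSpace ℝ H]
    [NormedAddCommGroup G] [NormedSpace ℝ G]
    (L : H →L[ℝ] G) (f : H → EReal) (y : G) : EReal :=
  ⨅ x : {x : H // L x = y}, f x.1

/-- Convex subdifferential of an `EReal`-valued function. -/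
def subdiffFn {H : Type*} [NormedAddCommGroup H] [InnerProductSpace ℝ H]
    (f : H → EReal) (x : H) : Set H :=
  {u | ∀ y, f x + ((⟪y - x, u⟫ : ℝ) : EReal) ≤ f y}

/-- `x` belongs to the strong relative interior of `C`. -/
def sriMem {H : Type*} [NormedAddCommGroup H] [Module ℝ H] (C : Set H) (x : H) : Prop :=
  x ∈ C ∧ IsClosedSubspaceCone ((fun y => y - x) '' C)


section Aux
variable {H : Type*} [NormedAddCommGroup H] [InnerProductSpace ℝ H]

/-- sublevel sets of an lsc function are closed -/
lemma lsc_sublevel_closed {f : H → EReal} (hl : LowerSemicontinuous f) (c : EReal) :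
    IsClosed {x | f x ≤ c} := by
  rw [← isOpen_compl_iff, isOpen_iff_mem_nhds]
  intro x hx
  simp only [Set.mem_compl_iff, Set.mem_setOf_eq, not_le] at hx
  filter_upwards [hl x c hx] with z hz
  simp only [Set.mem_compl_iff, Set.mem_setOf_eq, not_le]
  exact hz

def Epi (f : H → EReal) : Set (H × ℝ) := {p | f p.1 ≤ (p.2 : EReal)}

lemma epi_closed {f : H → EReal} (hl : LowerSemicontinuous f) : IsClosed (Epi f) := by
  rw [← isOpen_compl_iff, isOpen_iff_mem_nhds]
  rintro ⟨x, t⟩ hx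
  simp only [Set.mem_compl_iff, Epi, Set.mem_setOf_eq, not_le] at hx
  -- pick a real r with t < r and (r:EReal) < f x
  obtain ⟨r, htr, hrf⟩ : ∃ r : ℝ, t < r ∧ (r : EReal) < f x := by
    rcases eq_top_or_lt_top (f x) with h | h
    · exact ⟨t + 1, by linarith, by rw [h]; exact EReal.coe_lt_top _⟩
    · have hb : f x ≠ ⊥ := fun hb => by rw [hb] at hx; exact (EReal.bot_lt_coe t).not_gt hx
      set s := (f x).toReal with hs
      have hfx : f x = (s : EReal) := ((f x).coe_toReal h.ne hb).symm
      rw [hfx] at hx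
      have hts : t < s := EReal.coe_lt_coe_iff.mp hx
      refine ⟨(t + s) / 2, by linarith, ?_⟩
      rw [hfx]; exact_mod_cast by linarith
  have h1 : ∀ᶠ z in nhds x, (r : EReal) < f z := hl x r hrf
  have h2 : ∀ᶠ s in nhds t, s < r := eventually_lt_nhds htr
  have : ∀ᶠ p : H × ℝ in nhds (x, t), (r : EReal) < f p.1 ∧ p.2 < r := by
    rw [nhds_prod_eq]
    exact (h1.prod_mk h2).mono (fun p hp => hp)
  filter_upwards [this] with p hp
  simp only [Set.mem_compl_iff, Epi, Set.mem_setOf_eq, not_le]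
  exact lt_trans (by exact_mod_cast hp.2) hp.1

end Aux

section Aux2
variable {H : Type*} [NormedAddCommGroup H] [InnerProductSpace ℝ H] [CompleteSpace H]

lemma ereal_real {x : EReal} (hb : x ≠ ⊥) (ht : x ≠ ⊤) : ∃ r : ℝ, x = (r : EReal) :=
  ⟨x.toReal, (x.coe_toReal ht hb).symm⟩

lemma epi_convex {f : H → EReal} (hbot : ∀ x, f x ≠ ⊥) (hc : ConvexERealFn f) :
    Convex ℝ (Epi f) := by
  rintro ⟨px, ps⟩ hp ⟨qx, qs⟩ hq a b ha hb hab
  simp only [Epi, Set.mem_setOf_eq] at hp hq ⊢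
  simp only [Prod.smul_mk, Prod.mk_add_mk, smul_eq_mul]
  have hpt : f px ≠ ⊤ := fun h => by rw [h] at hp; exact (not_le.mpr (EReal.coe_lt_top ps)) hp
  have hqt : f qx ≠ ⊤ := fun h => by rw [h] at hq; exact (not_le.mpr (EReal.coe_lt_top qs)) hq
  obtain ⟨rp, hrp⟩ := ereal_real (hbot px) hpt
  obtain ⟨rq, hrq⟩ := ereal_real (hbot qx) hqt
  rw [hrp] at hp; rw [hrq] at hq
  have hp' : rp ≤ ps := EReal.coe_le_coe_iff.mp hp
  have hq' : rq ≤ qs := EReal.coe_le_coe_iff.mp hq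
  calc f (a • px + b • qx) ≤ (a : EReal) * f px + (b : EReal) * f qx := hc px qx a b ha hb hab
    _ = ((a * rp + b * rq : ℝ) : EReal) := by rw [hrp, hrq]; push_cast; ring
    _ ≤ ((a * ps + b * qs : ℝ) : EReal) := by
        apply EReal.coe_le_coe_iff.mpr
        have := mul_le_mul_of_nonneg_left hp' ha
        have := mul_le_mul_of_nonneg_left hq' hb
        linarith

lemma clm_decomp (φ : H × ℝ →L[ℝ] ℝ) :
    ∃ d : H, ∀ x t, φ (x, t) = ⟪x, d⟫ + t * φ (0, 1) := by
  set ψ := φ.comp (ContinuousLinearMap.inl ℝ H ℝ) with hψ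
  refine ⟨(InnerProductSpace.toDual ℝ H).symm ψ, fun x t => ?_⟩
  have h1 : ⟪x, (InnerProductSpace.toDual ℝ H).symm ψ⟫ = ψ x := by
    rw [real_inner_comm]; exact InnerProductSpace.toDual_symm_apply
  rw [h1]
  have h2 : (x, t) = ((x, (0:ℝ)) + ((0:H), t)) := by simp
  have h3 : ((0:H), t) = t • ((0:H), (1:ℝ)) := by simp
  rw [h2, map_add, h3, map_smul, smul_eq_mul]
  rfl

lemma minorant_to_conj {f : H → EReal} (hbot : ∀ x, f x ≠ ⊥) {d : H} {c : ℝ}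
    (h : ∀ x, ((⟪x, d⟫ + c : ℝ) : EReal) ≤ f x) : fconj f d ≤ ((-c : ℝ) : EReal) := by
  apply iSup_le
  intro x
  rcases eq_or_ne (f x) ⊤ with ht | ht
  · rw [ht]; simp
  · obtain ⟨rx, hrx⟩ := ereal_real (hbot x) ht
    have := h x; rw [hrx] at this ⊢
    rw [← EReal.coe_sub]
    apply EReal.coe_le_coe_iff.mpr
    have := EReal.coe_le_coe_iff.mp this
    linarith

lemma minorant_real {f : H → EReal} (hbot : ∀ x, f x ≠ ⊥) {d : H} {c : ℝ}
    (h : ∀ x, f x ≠ ⊤ → ⟪x, d⟫ + c ≤ (f x).toReal) :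
    ∀ x, ((⟪x, d⟫ + c : ℝ) : EReal) ≤ f x := by
  intro x
  rcases eq_or_ne (f x) ⊤ with ht | ht
  · rw [ht]; exact le_top
  · obtain ⟨rx, hrx⟩ := ereal_real (hbot x) ht
    have h2 := h x ht
    rw [hrx] at h2 ⊢
    simp only [EReal.toReal_coe] at h2
    exact_mod_cast h2

lemma exists_affine_minorant {f : H → EReal} (hp : ProperFn f) (hc : ConvexERealFn f)
    (hl : LowerSemicontinuous f) :
    ∃ d : H, ∃ c : ℝ, ∀ x, ((⟪x, d⟫ + c : ℝ) : EReal) ≤ f x := by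
  obtain ⟨x₁, hx₁⟩ := hp.2
  obtain ⟨r₁, hr₁⟩ := ereal_real (hp.1 x₁) hx₁
  have hp₀ : (x₁, r₁ - 1) ∉ Epi f := by
    simp only [Epi, Set.mem_setOf_eq, hr₁, not_le]
    exact_mod_cast by linarith
  obtain ⟨φ, u, hsep, hpt⟩ :=
    geometric_hahn_banach_closed_point (epi_convex hp.1 hc) (epi_closed hl) hp₀
  obtain ⟨d0, hd0⟩ := clm_decomp φ
  set r := φ (0, 1) with hrdef
  have hdom : ∀ x, f x ≠ ⊤ → ∀ t : ℝ, (f x).toReal ≤ t → ⟪x, d0⟫ + t * r < u := by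
    intro x hx t htx
    have : (x, t) ∈ Epi f := by
      obtain ⟨rx, hrx⟩ := ereal_real (hp.1 x) hx
      simp only [Epi, Set.mem_setOf_eq, hrx]
      rw [hrx] at htx; simp only [EReal.toReal_coe] at htx
      exact_mod_cast htx
    have := hsep _ this
    rwa [hd0] at this
  have hr_neg : r < 0 := by
    rcases lt_trichotomy r 0 with h | h | h
    · exact h
    · exfalso
      have h1 := hdom x₁ hx₁ r₁ (by rw [hr₁]; simp)
      have h2 := hpt
      rw [hd0] at h2
      rw [h] at h1 h2
      simp only [mul_zero] at h1 h2
      linarith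
    · exfalso
      have h1 := hdom x₁ hx₁ (max r₁ ((u - ⟪x₁, d0⟫) / r)) (by rw [hr₁]; simp)
      have h2 : (u - ⟪x₁, d0⟫) / r * r ≥ u - ⟪x₁, d0⟫ := by
        rw [div_mul_cancel₀ _ (ne_of_gt h)]
      have h3 : max r₁ ((u - ⟪x₁, d0⟫) / r) * r ≥ (u - ⟪x₁, d0⟫) / r * r :=
        mul_le_mul_of_nonneg_right (le_max_right _ _) (le_of_lt h)
      linarith
  refine ⟨(-(1:ℝ)/r) • d0, u / r, minorant_real hp.1 ?_⟩
  intro x hx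
  have h1 := hdom x hx (f x).toReal le_rfl
  rw [inner_smul_right]
  have hrne : r ≠ 0 := ne_of_lt hr_neg
  have e : (-1/r) * ⟪x, d0⟫ + u/r = (u - ⟪x, d0⟫)/r := by field_simp; ring
  rw [e, div_le_iff_of_neg hr_neg]
  linarith
end Aux2

section Aux3
variable {H : Type*} [NormedAddCommGroup H] [InnerProductSpace ℝ H] [CompleteSpace H]

lemma exists_minorant_gt {f : H → EReal} (hp : ProperFn f) (hc : ConvexERealFn f)
    (hl : LowerSemicontinuous f) (x₀ : H) (t : ℝ) (ht : (t : EReal) < f x₀) :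
    ∃ d : H, ∃ c : ℝ, (∀ x, ((⟪x, d⟫ + c : ℝ) : EReal) ≤ f x) ∧ t < ⟪x₀, d⟫ + c := by
  obtain ⟨x₁, hx₁⟩ := hp.2
  obtain ⟨r₁, hr₁⟩ := ereal_real (hp.1 x₁) hx₁
  have hp₀ : (x₀, t) ∉ Epi f := by
    simp only [Epi, Set.mem_setOf_eq, not_le]; exact ht
  obtain ⟨φ, u, hsep, hpt⟩ :=
    geometric_hahn_banach_closed_point (epi_convex hp.1 hc) (epi_closed hl) hp₀
  obtain ⟨d0, hd0⟩ := clm_decomp φ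
  set r := φ (0, 1) with hrdef
  have hdom : ∀ x, f x ≠ ⊤ → ∀ s : ℝ, (f x).toReal ≤ s → ⟪x, d0⟫ + s * r < u := by
    intro x hx s hsx
    have hmem : (x, s) ∈ Epi f := by
      obtain ⟨rx, hrx⟩ := ereal_real (hp.1 x) hx
      simp only [Epi, Set.mem_setOf_eq, hrx]
      rw [hrx] at hsx; simp only [EReal.toReal_coe] at hsx
      exact_mod_cast hsx
    have := hsep _ hmem
    rwa [hd0] at this
  have hpt' : u < ⟪x₀, d0⟫ + t * r := by rw [hd0] at hpt; exact hpt
  have hr_nonpos : r ≤ 0 := by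
    by_contra h
    push_neg at h
    have h1 := hdom x₁ hx₁ (max r₁ ((u - ⟪x₁, d0⟫) / r)) (by rw [hr₁]; simp)
    have h2 : (u - ⟪x₁, d0⟫) / r * r ≥ u - ⟪x₁, d0⟫ := by
      rw [div_mul_cancel₀ _ (ne_of_gt h)]
    have h3 : max r₁ ((u - ⟪x₁, d0⟫) / r) * r ≥ (u - ⟪x₁, d0⟫) / r * r :=
      mul_le_mul_of_nonneg_right (le_max_right _ _) (le_of_lt h)
    linarith
  rcases eq_or_lt_of_le hr_nonpos with hr0 | hr_neg
  · -- vertical separation: combine with a global affine minorant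
    obtain ⟨db, cb, hmin⟩ := exists_affine_minorant hp hc hl
    have hx0gt : u < ⟪x₀, d0⟫ := by rw [hr0] at hpt'; simpa using hpt'
    have hxlt : ∀ x, f x ≠ ⊤ → ⟪x, d0⟫ < u := by
      intro x hx
      have := hdom x hx (f x).toReal le_rfl
      rw [hr0] at this; simpa using this
    set p := ⟪x₀, d0⟫ - u with hpdef
    have hppos : 0 < p := by simp [hpdef]; linarith
    set lam := max 0 ((t - ⟪x₀, db⟫ - cb + 1) / p) with hlam
    have hlam0 : 0 ≤ lam := le_max_left _ _
    refine ⟨db + lam • d0, cb - lam * u, minorant_real hp.1 ?_, ?_⟩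
    · intro x hx
      have h1 : ⟪x, db⟫ + cb ≤ (f x).toReal := by
        have := hmin x
        obtain ⟨rx, hrx⟩ := ereal_real (hp.1 x) hx
        rw [hrx] at this ⊢
        simpa using EReal.coe_le_coe_iff.mp this
      have h2 : lam * (⟪x, d0⟫ - u) ≤ 0 :=
        mul_nonpos_of_nonneg_of_nonpos hlam0 (by linarith [hxlt x hx])
      rw [inner_add_right, inner_smul_right]
      nlinarith
    · rw [inner_add_right, inner_smul_right]
      have h3 : (t - ⟪x₀, db⟫ - cb + 1) / p ≤ lam := le_max_right _ _
      have h4 : (t - ⟪x₀, db⟫ - cb + 1) ≤ lam * p := by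
        rw [div_le_iff₀ hppos] at h3; linarith
      simp only [hpdef] at h4
      nlinarith
  · -- non-vertical
    have hrne : r ≠ 0 := ne_of_lt hr_neg
    refine ⟨(-(1:ℝ)/r) • d0, u / r, minorant_real hp.1 ?_, ?_⟩
    · intro x hx
      have h1 := hdom x hx (f x).toReal le_rfl
      rw [inner_smul_right]
      have e : (-1/r) * ⟪x, d0⟫ + u/r = (u - ⟪x, d0⟫)/r := by field_simp; ring
      rw [e, div_le_iff_of_neg hr_neg]
      linarith
    · rw [inner_smul_right]
      have e : (-1/r) * ⟪x₀, d0⟫ + u/r = (u - ⟪x₀, d0⟫)/r := by field_simp; ring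
      rw [e, lt_div_iff_of_neg hr_neg]
      linarith
end Aux3

section Aux4
variable {H : Type*} [NormedAddCommGroup H] [InnerProductSpace ℝ H] [CompleteSpace H]

lemma baire_cone {S : Submodule ℝ H} (hS : IsClosed (S : Set H)) (E : ℕ → Set H)
    (hconv : ∀ n, Convex ℝ (E n)) (hmono : ∀ m n, m ≤ n → E m ⊆ E n)
    (hsub : ∀ n, (E n) ⊆ (S : Set H)) (hcover : ∀ z ∈ S, ∃ n, z ∈ E n) :
    ∃ N : ℕ, ∃ ρ : ℝ, 0 < ρ ∧ ∀ z ∈ S, ‖z‖ ≤ ρ → z ∈ closure (E N) := by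
  haveI : CompleteSpace S := hS.completeSpace_coe
  haveI : BaireSpace S := BaireSpace.of_completelyPseudoMetrizable
  have hFclosed : ∀ n : ℕ, IsClosed ((Subtype.val : S → H) ⁻¹' closure (E n)) :=
    fun n => isClosed_closure.preimage continuous_subtype_val
  have hFcover : ⋃ n, ((Subtype.val : S → H) ⁻¹' closure (E n)) = Set.univ := by
    apply Set.eq_univ_of_forall
    intro z
    obtain ⟨n, hn⟩ := hcover z.1 z.2
    exact Set.mem_iUnion.mpr ⟨n, subset_closure hn⟩
  obtain ⟨n, ⟨z₀, hz₀⟩⟩ := nonempty_interior_of_iUnion_of_closed hFclosed hFcover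
  rw [mem_interior_iff_mem_nhds, Metric.mem_nhds_iff] at hz₀
  obtain ⟨ε, hε, hball⟩ := hz₀
  -- translate ball inclusion to H
  have hball' : ∀ z : H, z ∈ S → ‖z - z₀.1‖ < ε → z ∈ closure (E n) := by
    intro z hz hznorm
    have : (⟨z, hz⟩ : S) ∈ Metric.ball z₀ ε := by
      rw [Metric.mem_ball, Subtype.dist_eq, dist_eq_norm]
      exact hznorm
    exact hball this
  obtain ⟨m, hm⟩ := hcover (-z₀.1) (S.neg_mem z₀.2)
  set N := max n m with hN
  refine ⟨N, ε / 4, by linarith, ?_⟩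
  intro z hz hznorm
  have h2z : (2:ℝ) • z + z₀.1 ∈ closure (E N) := by
    apply closure_mono (hmono n N (le_max_left _ _))
    apply hball' _ (S.add_mem (S.smul_mem 2 hz) z₀.2)
    rw [add_sub_cancel_right, norm_smul]
    simp only [Real.norm_ofNat]
    linarith
  have hmz : -z₀.1 ∈ closure (E N) := subset_closure (hmono m N (le_max_right _ _) hm)
  have hcc : Convex ℝ (closure (E N)) := (hconv N).closure
  have := hcc h2z hmz (by norm_num : (0:ℝ) ≤ 1/2) (by norm_num : (0:ℝ) ≤ 1/2) (by norm_num)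
  have heq : (1/2 : ℝ) • ((2:ℝ) • z + z₀.1) + (1/2 : ℝ) • (-z₀.1) = z := by
    module
  rwa [heq] at this

/-- intersection of a nested sequence of nonempty bounded closed convex sets is nonempty -/
lemma nested_inter {A : ℕ → Set H} (hne : ∀ m, (A m).Nonempty) (hcl : ∀ m, IsClosed (A m))
    (hcv : ∀ m, Convex ℝ (A m)) (hanti : ∀ m n, m ≤ n → A n ⊆ A m) (R : ℝ)
    (hbd : ∀ m, ∀ x ∈ A m, ‖x‖ ≤ R) : (⋂ m, A m).Nonempty := by
  -- nearest point to 0 in each A m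
  have hproj : ∀ m, ∃ v ∈ A m, ‖(0:H) - v‖ = ⨅ w : A m, ‖(0:H) - w‖ := fun m =>
    exists_norm_eq_iInf_of_complete_convex (hne m) (hcl m).isComplete (hcv m) 0
  choose p hpA hpnorm using hproj
  set δ : ℕ → ℝ := fun m => ‖p m‖ with hδ
  have hδnonneg : ∀ m, 0 ≤ δ m := fun m => norm_nonneg _
  have hδle : ∀ m n, m ≤ n → ∀ x ∈ A n, δ m ≤ ‖x‖ := by
    intro m n hmn x hx
    have e1 : δ m = ‖(0:H) - p m‖ := by rw [zero_sub, norm_neg]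
    rw [e1, hpnorm m]
    calc (⨅ w : A m, ‖(0:H) - w‖) ≤ ‖(0:H) - x‖ :=
          ciInf_le ⟨0, Set.forall_mem_range.2 fun _ => norm_nonneg _⟩
            (⟨x, hanti m n hmn hx⟩ : A m)
      _ = ‖x‖ := by rw [zero_sub, norm_neg]
  have hδmono : Monotone δ := by
    intro m n hmn
    exact hδle m n hmn (p n) (hpA n)
  have hδbdd : ∀ m, δ m ≤ R := fun m => hbd m (p m) (hpA m)
  set D := ⨆ m, δ m with hD
  have hδD : ∀ m, δ m ≤ D := fun m => le_ciSup ⟨R, Set.forall_mem_range.2 hδbdd⟩ m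
  have htend : Filter.Tendsto δ Filter.atTop (nhds D) :=
    tendsto_atTop_ciSup hδmono ⟨R, Set.forall_mem_range.2 hδbdd⟩
  -- Cauchy via parallelogram
  have key : ∀ N m n, N ≤ m → N ≤ n → ‖p m - p n‖^2 ≤ 4 * (D^2 - δ N ^ 2) := by
    intro N m n hNm hNn
    have hpar := parallelogram_law_with_norm ℝ (p m) (p n)
    have hmid : δ N ≤ ‖(1/2 : ℝ) • (p m + p n)‖ := by
      apply hδle N N le_rfl
      have := (hcv N) (hanti N m hNm (hpA m)) (hanti N n hNn (hpA n))
        (by norm_num : (0:ℝ) ≤ 1/2) (by norm_num : (0:ℝ) ≤ 1/2) (by norm_num)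
      rwa [smul_add]
    have hmid' : 2 * δ N ≤ ‖p m + p n‖ := by
      rw [norm_smul] at hmid
      have hhalf : ‖(1/2 : ℝ)‖ = 1/2 := by rw [Real.norm_eq_abs]; norm_num
      rw [hhalf] at hmid
      linarith
    have h1 : δ m ≤ D := hδD m
    have h2 : δ n ≤ D := hδD n
    have h3 : 0 ≤ δ N := hδnonneg N
    nlinarith [hpar, norm_nonneg (p m - p n), hδnonneg m, hδnonneg n]
  have hsqrt4 : Real.sqrt 4 = 2 := by
    rw [show (4:ℝ) = 2^2 by norm_num, Real.sqrt_sq (by norm_num : (0:ℝ) ≤ 2)]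
  have hcauchy : CauchySeq p := by
    apply cauchySeq_of_le_tendsto_0 (fun N => 2 * Real.sqrt (D^2 - δ N ^ 2))
    · intro m n N hNm hNn
      rw [dist_eq_norm]
      have hk := key N m n hNm hNn
      have h1 : ‖p m - p n‖ = Real.sqrt (‖p m - p n‖^2) :=
        (Real.sqrt_sq (norm_nonneg _)).symm
      rw [h1]
      have h2 := Real.sqrt_le_sqrt hk
      rw [Real.sqrt_mul (by norm_num : (0:ℝ) ≤ 4), hsqrt4] at h2
      exact h2
    · have t1 : Filter.Tendsto (fun N => D^2 - δ N ^ 2) Filter.atTop (nhds 0) := by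
        have := (tendsto_const_nhds (x := D^2) (f := Filter.atTop (α := ℕ))).sub
          ((htend.pow 2))
        simpa using this
      have t2 := (Real.continuous_sqrt.tendsto 0).comp t1
      rw [Real.sqrt_zero] at t2
      have t3 := t2.const_mul (2:ℝ)
      simpa using t3
  obtain ⟨q, hq⟩ := cauchySeq_tendsto_of_complete hcauchy
  refine ⟨q, Set.mem_iInter.mpr fun m => ?_⟩
  apply (hcl m).mem_of_tendsto hq
  filter_upwards [Filter.eventually_ge_atTop m] with n hn
  exact hanti m n hn (hpA n)
end Aux4


set_option maxHeartbeats 2000000 in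
/-- under the qualification `0 ∈ sri(ran L* − dom f*)`,
`∂(L ▷ f) = L ▷ ∂f`. -/
theorem subdiff_infPost {H G : Type*}
    [NormedAddCommGroup H] [InnerProductSpace ℝ H] [CompleteSpace H]
    [NormedAddCommGroup G] [InnerProductSpace ℝ G] [CompleteSpace G]
    (f : H → EReal) (L : H →L[ℝ] G) (hf : IsGamma0 f)
    (hq : sriMem (Set.range (ContinuousLinearMap.adjoint L) - effDom (fconj f)) 0) :
    subdiffFn (infPost L f) = parComp L (subdiffFn f) := by
  classical
  obtain ⟨hprop0, hfconv, hflsc⟩ := hf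
  obtain ⟨hbot, x₁, hx₁⟩ := hprop0
  have hprop : ProperFn f := ⟨hbot, x₁, hx₁⟩
  obtain ⟨r₁, hr₁⟩ := ereal_real (hbot x₁) hx₁
  set L' := ContinuousLinearMap.adjoint L with hL'
  have adj : ∀ (x : H) (w : G), ⟪x, L' w⟫ = ⟪L x, w⟫ := fun x w =>
    ContinuousLinearMap.adjoint_inner_right L x w
  set C : Set H := Set.range L' - effDom (fconj f) with hCdef
  obtain ⟨hC0, hsri⟩ := hq
  obtain ⟨S, hSclosed, hScone⟩ := hsri
  have hcone : coneGen C = (S : Set H) := by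
    rw [← hScone]; congr 1
    simp
  -- Fenchel-Young
  have FY : ∀ (x u : H), ((⟪x, u⟫ : ℝ) : EReal) - f x ≤ fconj f u := fun x u =>
    le_iSup (fun x => ((⟪x, u⟫ : ℝ) : EReal) - f x) x
  have FYreal : ∀ (x u : H) (rx β : ℝ), f x = (rx : EReal) → fconj f u ≤ (β : EReal) →
      ⟪x, u⟫ - rx ≤ β := by
    intro x u rx β hfx hcb
    have h1 := (FY x u).trans hcb
    rw [hfx, ← EReal.coe_sub] at h1
    exact_mod_cast h1
  have hconj_ne_bot : ∀ u : H, fconj f u ≠ ⊥ := by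
    intro u
    have h1 := FY x₁ u
    rw [hr₁, ← EReal.coe_sub] at h1
    exact ((EReal.bot_lt_coe _).trans_le h1).ne'
  -- unpack the qualification membership
  rw [Set.mem_sub] at hC0
  obtain ⟨a₀, ha₀, d₀, hd₀, heq0⟩ := hC0
  obtain ⟨u₀, rfl⟩ := ha₀
  have hLu₀ : L' u₀ = d₀ := by rwa [sub_eq_zero] at heq0
  have hCS : C ⊆ (S : Set H) := by
    intro z hz
    rw [← hcone]
    exact ⟨1, zero_le_one, z, hz, (one_smul ℝ z).symm⟩
  have hd₀S : d₀ ∈ S := by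
    have h1 : L' ((2:ℝ) • u₀) - d₀ ∈ S := hCS (Set.sub_mem_sub ⟨(2:ℝ) • u₀, rfl⟩ hd₀)
    rw [map_smul, hLu₀] at h1
    have h2 : (2:ℝ) • d₀ - d₀ = d₀ := by
      rw [two_smul]; abel
    rwa [h2] at h1
  have hranS : ∀ u : G, L' u ∈ S := by
    intro u
    have h1 : L' u - d₀ ∈ S := hCS (Set.sub_mem_sub ⟨u, rfl⟩ hd₀)
    have h2 := S.add_mem h1 hd₀S
    rwa [sub_add_cancel] at h2
  have hdomS : ∀ d : H, fconj f d ≠ ⊤ → d ∈ S := by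
    intro d hd
    have h1 : L' u₀ - d ∈ S := hCS (Set.sub_mem_sub ⟨u₀, rfl⟩ hd)
    have h2 := S.sub_mem (hranS u₀) h1
    rwa [sub_sub_cancel] at h2
  have hkerperp : ∀ s : H, s ∈ Sᗮ → L s = 0 := by
    intro s hs
    have h1 : ⟪L' (L s), s⟫ = 0 := (Submodule.mem_orthogonal _ _).mp hs _ (hranS (L s))
    rw [real_inner_comm, adj] at h1
    exact inner_self_eq_zero.mp h1
  -- invariance of f under translations orthogonal to S
  have hinv : ∀ (x s : H), f x ≠ ⊤ → s ∈ Sᗮ → f (x + s) ≤ f x := by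
    intro x s hx hsP
    by_contra hlt
    push_neg at hlt
    obtain ⟨rx, hrx⟩ := ereal_real (hbot x) hx
    obtain ⟨t, hrt, htf⟩ : ∃ t : ℝ, rx < t ∧ (t : EReal) < f (x + s) := by
      rcases eq_or_ne (f (x + s)) ⊤ with h | h
      · exact ⟨rx + 1, lt_add_one rx, by rw [h]; exact EReal.coe_lt_top _⟩
      · obtain ⟨rs, hrs⟩ := ereal_real (hbot _) h
        rw [hrx, hrs] at hlt
        have : rx < rs := EReal.coe_lt_coe_iff.mp hlt
        exact ⟨(rx + rs) / 2, by linarith, by rw [hrs]; exact_mod_cast by linarith⟩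
    obtain ⟨d, c, hmin, hgt⟩ := exists_minorant_gt hprop hfconv hflsc (x + s) t htf
    have hdS : d ∈ S := by
      apply hdomS d
      have h1 := minorant_to_conj hbot hmin
      exact (h1.trans_lt (EReal.coe_lt_top _)).ne
    have hsd : ⟪s, d⟫ = 0 := by
      rw [real_inner_comm]
      exact (Submodule.mem_orthogonal _ _).mp hsP d hdS
    rw [inner_add_left, hsd, add_zero] at hgt
    have hminx := hmin x
    rw [hrx] at hminx
    have : ⟪x, d⟫ + c ≤ rx := EReal.coe_le_coe_iff.mp hminx
    linarith
  have hiInf_le : ∀ (z : G) (x : H), L x = z → infPost L f z ≤ f x := fun z x hx =>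
    iInf_le (fun p : {p : H // L p = z} => f p.1) ⟨x, hx⟩
  -- now the main equality
  funext y
  ext v
  simp only [subdiffFn, Set.mem_setOf_eq, parComp, SVInv, Set.mem_image, Set.mem_setOf_eq]
  constructor
  · -- hard direction
    intro hv
    -- g y is not ⊤
    have hgtop : infPost L f y ≠ ⊤ := by
      intro htop
      have h1 := hv (L x₁)
      rw [htop, EReal.top_add_coe] at h1
      exact hx₁ (top_le_iff.mp (h1.trans (hiInf_le (L x₁) x₁ rfl)))
    have hgbot : infPost L f y ≠ ⊥ := by
      have hd₀t : fconj f d₀ ≠ ⊤ := hd₀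
      obtain ⟨β₀, hβ₀⟩ := ereal_real (hconj_ne_bot d₀) hd₀t
      have h1 : ((⟪y, u₀⟫ - β₀ : ℝ) : EReal) ≤ infPost L f y := by
        apply le_iInf
        rintro ⟨x, hx⟩
        rcases eq_or_ne (f x) ⊤ with ht | ht
        · rw [ht]; exact le_top
        · obtain ⟨rx, hrx⟩ := ereal_real (hbot x) ht
          have h2 : ⟪x, d₀⟫ - rx ≤ β₀ := FYreal x d₀ rx β₀ hrx hβ₀.le
          rw [← hLu₀, adj, hx] at h2
          rw [hrx]
          exact_mod_cast by linarith
      exact ((EReal.bot_lt_coe _).trans_le h1).ne'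
    obtain ⟨α, hα⟩ := ereal_real hgbot hgtop
    have hαle : ∀ x : H, L x = y → (α : EReal) ≤ f x := fun x hx => by
      rw [← hα]; exact hiInf_le y x hx
    -- the conjugate value
    have hconjv : fconj f (L' v) = ((⟪y, v⟫ - α : ℝ) : EReal) := by
      apply le_antisymm
      · apply iSup_le
        intro x
        rcases eq_or_ne (f x) ⊤ with ht | ht
        · rw [ht]
          simp
        · obtain ⟨rx, hrx⟩ := ereal_real (hbot x) ht
          have h1 := (hv (L x)).trans (hiInf_le (L x) x rfl)
          rw [hα, hrx, ← EReal.coe_add] at h1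
          have h2 : α + ⟪L x - y, v⟫ ≤ rx := EReal.coe_le_coe_iff.mp h1
          rw [hrx, ← EReal.coe_sub]
          apply EReal.coe_le_coe_iff.mpr
          have h3 : ⟪x, L' v⟫ = ⟪L x, v⟫ := adj x v
          have h4 : ⟪L x - y, v⟫ = ⟪L x, v⟫ - ⟪y, v⟫ := inner_sub_left _ _ _
          linarith
      · by_contra hlt
        push_neg at hlt
        obtain ⟨q, hq'⟩ := ereal_real (hconj_ne_bot (L' v)) hlt.ne_top
        rw [hq'] at hlt
        have hqlt : q < ⟪y, v⟫ - α := EReal.coe_lt_coe_iff.mp hlt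
        have h7 : infPost L f y < ((⟪y, v⟫ - q : ℝ) : EReal) := by
          rw [hα]
          exact_mod_cast by linarith
        obtain ⟨⟨x, hx⟩, hfx⟩ := iInf_lt_iff.mp h7
        have hxt : f x ≠ ⊤ := (hfx.trans (EReal.coe_lt_top _)).ne
        obtain ⟨rx, hrx⟩ := ereal_real (hbot x) hxt
        rw [hrx] at hfx
        have h8 : rx < ⟪y, v⟫ - q := EReal.coe_lt_coe_iff.mp hfx
        have h9 : ⟪x, L' v⟫ - rx ≤ q := FYreal x (L' v) rx q hrx hq'.le
        rw [adj, hx] at h9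
        linarith
    -- sublevel convexity of the conjugate
    have hsubconv : ∀ (n : ℝ) (d₁ d₂ : H) (a b : ℝ), 0 ≤ a → 0 ≤ b → a + b = 1 →
        fconj f d₁ ≤ (n : EReal) → fconj f d₂ ≤ (n : EReal) →
        fconj f (a • d₁ + b • d₂) ≤ (n : EReal) := by
      intro n d₁ d₂ a b ha hb hab h₁ h₂
      apply iSup_le
      intro x
      rcases eq_or_ne (f x) ⊤ with ht | ht
      · rw [ht]; simp
      · obtain ⟨rx, hrx⟩ := ereal_real (hbot x) ht
        have k₁ : ⟪x, d₁⟫ - rx ≤ n := FYreal x d₁ rx n hrx h₁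
        have k₂ : ⟪x, d₂⟫ - rx ≤ n := FYreal x d₂ rx n hrx h₂
        rw [hrx, ← EReal.coe_sub]
        apply EReal.coe_le_coe_iff.mpr
        rw [inner_add_right, inner_smul_right, inner_smul_right]
        have m₁ := mul_le_mul_of_nonneg_left k₁ ha
        have m₂ := mul_le_mul_of_nonneg_left k₂ hb
        rw [mul_sub] at m₁ m₂
        have hr : a * rx + b * rx = rx := by rw [← add_mul, hab, one_mul]
        have hn : a * n + b * n = n := by rw [← add_mul, hab, one_mul]
        linarith
    -- the Baire sets
    set E : ℕ → Set H := fun n => {z | ∃ c u d, 0 ≤ c ∧ c ≤ (n : ℝ) ∧ ‖u‖ ≤ (n : ℝ) ∧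
      fconj f d ≤ ((n : ℝ) : EReal) ∧ z = c • (L' u - d)} with hEdef
    have hEconv : ∀ n, Convex ℝ (E n) := by
      intro n z₁ hz₁ z₂ hz₂ a b ha hb hab
      obtain ⟨c₁, u₁, d₁, h10, h1n, h1u, h1d, rfl⟩ := hz₁
      obtain ⟨c₂, u₂, d₂, h20, h2n, h2u, h2d, rfl⟩ := hz₂
      rcases eq_or_lt_of_le (show (0:ℝ) ≤ a * c₁ + b * c₂ by positivity) with hc0 | hcpos
      · have e1 : a * c₁ = 0 := by nlinarith [mul_nonneg ha h10, mul_nonneg hb h20]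
        have e2 : b * c₂ = 0 := by nlinarith [mul_nonneg ha h10, mul_nonneg hb h20]
        refine ⟨0, 0, d₁, le_rfl, Nat.cast_nonneg n, by simp, h1d, ?_⟩
        rw [smul_smul, smul_smul, e1, e2, zero_smul, zero_smul, zero_smul, add_zero]
      · set cb := a * c₁ + b * c₂ with hcb
        set l₁ := a * c₁ / cb with hl₁def
        set l₂ := b * c₂ / cb with hl₂def
        have hl₁ : 0 ≤ l₁ := div_nonneg (mul_nonneg ha h10) hcpos.le
        have hl₂ : 0 ≤ l₂ := div_nonneg (mul_nonneg hb h20) hcpos.le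
        have hlsum : l₁ + l₂ = 1 := by
          rw [hl₁def, hl₂def, ← add_div, hcb]
          exact div_self hcpos.ne'
        refine ⟨cb, l₁ • u₁ + l₂ • u₂, l₁ • d₁ + l₂ • d₂, hcpos.le, ?_, ?_,
          hsubconv (n : ℝ) d₁ d₂ l₁ l₂ hl₁ hl₂ hlsum h1d h2d, ?_⟩
        · nlinarith [mul_le_mul_of_nonneg_left h1n ha, mul_le_mul_of_nonneg_left h2n hb]
        · calc ‖l₁ • u₁ + l₂ • u₂‖ ≤ ‖l₁ • u₁‖ + ‖l₂ • u₂‖ := norm_add_le _ _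
            _ = l₁ * ‖u₁‖ + l₂ * ‖u₂‖ := by
                rw [norm_smul, norm_smul, Real.norm_eq_abs, Real.norm_eq_abs,
                  abs_of_nonneg hl₁, abs_of_nonneg hl₂]
            _ ≤ (n : ℝ) := by
                nlinarith [mul_le_mul_of_nonneg_left h1u hl₁, mul_le_mul_of_nonneg_left h2u hl₂]
        · have e2 : cb • ((l₁ • L' u₁ + l₂ • L' u₂) - (l₁ • d₁ + l₂ • d₂)) =
              (cb * l₁) • (L' u₁ - d₁) + (cb * l₂) • (L' u₂ - d₂) := by
            module
          have e3 : cb * l₁ = a * c₁ := by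
            rw [hl₁def]; field_simp
          have e4 : cb * l₂ = b * c₂ := by
            rw [hl₂def]; field_simp
          rw [smul_smul, smul_smul, map_add, map_smul, map_smul, e2, e3, e4]
    have hEmono : ∀ m n : ℕ, m ≤ n → E m ⊆ E n := by
      intro m n hmn z hz
      obtain ⟨c, u, d, hc0, hcm, hum, hdm, rfl⟩ := hz
      have hmn' : (m : ℝ) ≤ (n : ℝ) := Nat.cast_le.mpr hmn
      exact ⟨c, u, d, hc0, hcm.trans hmn', hum.trans hmn',
        hdm.trans (EReal.coe_le_coe_iff.mpr hmn'), rfl⟩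
    have hEsub : ∀ n, E n ⊆ (S : Set H) := by
      intro n z hz
      obtain ⟨c, u, d, hc0, _, _, hd, rfl⟩ := hz
      have hdC : L' u - d ∈ C := Set.sub_mem_sub ⟨u, rfl⟩
        (show d ∈ effDom (fconj f) from (hd.trans_lt (EReal.coe_lt_top _)).ne)
      rw [← hcone]
      exact ⟨c, hc0, _, hdC, rfl⟩
    have hEcover : ∀ z ∈ S, ∃ n, z ∈ E n := by
      intro z hz
      have hz' : z ∈ coneGen C := by rw [hcone]; exact hz
      obtain ⟨c, hc0, w, hw, rfl⟩ := hz'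
      rw [Set.mem_sub] at hw
      obtain ⟨a, ha, d, hd, hadw⟩ := hw
      obtain ⟨u, rfl⟩ := ha
      obtain ⟨βd, hβd⟩ := ereal_real (hconj_ne_bot d) hd
      obtain ⟨n, hn⟩ := exists_nat_ge (max c (max ‖u‖ βd))
      refine ⟨n, c, u, d, hc0, ?_, ?_, ?_, by rw [hadw]⟩
      · exact (le_max_left _ _).trans hn
      · exact ((le_max_left _ _).trans (le_max_right _ _)).trans hn
      · rw [hβd]
        exact_mod_cast ((le_max_right _ _).trans (le_max_right _ _)).trans hn
    obtain ⟨N, ρ, hρ, hball⟩ := baire_cone hSclosed E hEconv hEmono hEsub hEcover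
    set B : ℝ := (N : ℝ) * (‖y‖ * (N : ℝ)) + (N : ℝ) * ((|α| + 1) + (N : ℝ)) with hBdef
    have hBnonneg : 0 ≤ B := by positivity
    -- inner product bound on the fiber
    have hIB : ∀ x : H, L x = y → f x ≤ ((α + 1 : ℝ) : EReal) →
        ∀ z ∈ closure (E N), -B ≤ ⟪x, z⟫ := by
      intro x hx hfb z hz
      have hxt : f x ≠ ⊤ := (hfb.trans_lt (EReal.coe_lt_top _)).ne
      obtain ⟨rx, hrx⟩ := ereal_real (hbot x) hxt
      have hrx1 : rx ≤ α + 1 := by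
        rw [hrx] at hfb; exact EReal.coe_le_coe_iff.mp hfb
      have hrx0 : α ≤ rx := by
        have := hαle x hx; rw [hrx] at this; exact EReal.coe_le_coe_iff.mp this
      have hcl2 : IsClosed {w : H | -B ≤ ⟪x, w⟫} :=
        isClosed_le continuous_const (Continuous.inner continuous_const continuous_id)
      refine closure_minimal ?_ hcl2 hz
      rintro w ⟨c, u, d, hc0, hcN, huN, hdN, rfl⟩
      have h1 : ⟪x, c • (L' u - d)⟫ = c * (⟪y, u⟫ - ⟪x, d⟫) := by
        rw [inner_smul_right, inner_sub_right, adj, hx]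
      rw [Set.mem_setOf_eq, h1]
      have h2 : ⟪x, d⟫ - rx ≤ (N : ℝ) := FYreal x d rx (N : ℝ) hrx hdN
      have h3 : |⟪y, u⟫| ≤ ‖y‖ * (N : ℝ) :=
        (abs_real_inner_le_norm y u).trans (mul_le_mul_of_nonneg_left huN (norm_nonneg y))
      have h4 : -(‖y‖ * (N : ℝ)) - ((|α| + 1) + (N : ℝ)) ≤ ⟪y, u⟫ - ⟪x, d⟫ := by
        have h5 : ⟪x, d⟫ ≤ rx + (N : ℝ) := by linarith
        have h6 : rx ≤ |α| + 1 := hrx1.trans (by linarith [le_abs_self α])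
        have h7 : -(‖y‖ * (N : ℝ)) ≤ ⟪y, u⟫ := neg_le_of_abs_le h3
        linarith
      have hK : (0 : ℝ) ≤ ‖y‖ * (N : ℝ) + ((|α| + 1) + (N : ℝ)) := by positivity
      have h8 := mul_le_mul_of_nonneg_left h4 hc0
      have h9 := mul_le_mul_of_nonneg_right hcN hK
      rw [hBdef]
      nlinarith [h8, h9]
    haveI : CompleteSpace S := hSclosed.completeSpace_coe
    -- projection bound
    have hPbound : ∀ x : H, L x = y → f x ≤ ((α + 1 : ℝ) : EReal) →
        ‖((S.orthogonalProjectionOnto x : S) : H)‖ ≤ B / ρ := by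
      intro x hx hfb
      set w : H := ((S.orthogonalProjectionOnto x : S) : H) with hwdef
      have hwS : w ∈ S := SetLike.coe_mem _
      have hxw : x - w ∈ Sᗮ := Submodule.sub_starProjection_mem_orthogonal x
      have hiw : ⟪x, w⟫ = ‖w‖ ^ 2 := by
        have h0 : ⟪w, x - w⟫ = 0 := (Submodule.mem_orthogonal _ _).mp hxw w hwS
        rw [real_inner_comm] at h0
        have h1 : ⟪x - w, w⟫ = ⟪x, w⟫ - ⟪w, w⟫ := inner_sub_left _ _ _
        rw [h1] at h0
        rw [← real_inner_self_eq_norm_sq]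
        linarith
      rcases eq_or_ne w 0 with hw0 | hw0
      · rw [hw0, norm_zero]
        exact div_nonneg hBnonneg hρ.le
      · have hwpos : 0 < ‖w‖ := norm_pos_iff.mpr hw0
        set z : H := (-(ρ / ‖w‖)) • w with hzdef
        have hzS : z ∈ S := S.smul_mem _ hwS
        have hznorm : ‖z‖ = ρ := by
          rw [hzdef, norm_smul, Real.norm_eq_abs, abs_neg,
            abs_of_pos (div_pos hρ hwpos), div_mul_cancel₀ _ hwpos.ne']
        have h10 := hIB x hx hfb z (hball z hzS hznorm.le)
        rw [hzdef, inner_smul_right, hiw] at h10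
        have h11 : ρ / ‖w‖ * ‖w‖ ^ 2 = ρ * ‖w‖ := by
          field_simp
        rw [neg_mul, h11] at h10
        rw [le_div_iff₀ hρ]
        nlinarith
    -- nested sublevel sets on the fiber
    set R : ℝ := B / ρ with hRdef
    set A : ℕ → Set H := fun m =>
      {x | L x = y ∧ f x ≤ ((α + 1 / (m + 1) : ℝ) : EReal) ∧ ‖x‖ ≤ R} with hAdef
    have honepos : ∀ m : ℕ, (0 : ℝ) < 1 / ((m : ℝ) + 1) := fun m => by positivity
    have hone1 : ∀ m : ℕ, 1 / ((m : ℝ) + 1) ≤ 1 := by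
      intro m
      rw [div_le_one (by positivity)]
      have := Nat.cast_nonneg (α := ℝ) m
      linarith
    have hAne : ∀ m, (A m).Nonempty := by
      intro m
      have h7 : infPost L f y < ((α + 1 / ((m : ℝ) + 1) : ℝ) : EReal) := by
        rw [hα]
        exact_mod_cast lt_add_of_pos_right α (honepos m)
      obtain ⟨⟨x, hx⟩, hfx⟩ := iInf_lt_iff.mp h7
      have hfx1 : f x ≤ ((α + 1 : ℝ) : EReal) := by
        refine hfx.le.trans ?_
        have h8 : α + 1 / ((m : ℝ) + 1) ≤ α + 1 := by linarith [hone1 m]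
        exact_mod_cast h8
      have hxt : f x ≠ ⊤ := (hfx1.trans_lt (EReal.coe_lt_top _)).ne
      set w : H := ((S.orthogonalProjectionOnto x : S) : H) with hwdef
      have hxw : x - w ∈ Sᗮ := Submodule.sub_starProjection_mem_orthogonal x
      have hLw : L w = y := by
        have h0 : L (x - w) = 0 := hkerperp _ hxw
        rw [map_sub, sub_eq_zero] at h0
        rw [← h0, hx]
      have hfw : f w ≤ f x := by
        have h0 := hinv x (w - x) hxt (by
          have := Sᗮ.neg_mem hxw
          rwa [neg_sub] at this)
        have e : x + (w - x) = w := by abel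
        rwa [e] at h0
      exact ⟨w, hLw, hfw.trans hfx.le, hPbound x hx hfx1⟩
    have hAcl : ∀ m, IsClosed (A m) := by
      intro m
      have : A m = {x | L x = y} ∩ ({x | f x ≤ ((α + 1 / (m + 1) : ℝ) : EReal)} ∩
          {x | ‖x‖ ≤ R}) := by
        ext x; simp [hAdef, and_assoc]
      rw [this]
      exact (isClosed_eq L.continuous continuous_const).inter
        ((lsc_sublevel_closed hflsc _).inter (isClosed_le continuous_norm continuous_const))
    have hAcv : ∀ m, Convex ℝ (A m) := by
      intro m x hx x' hx' a b ha hb hab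
      obtain ⟨hx1, hx2, hx3⟩ := hx
      obtain ⟨hx1', hx2', hx3'⟩ := hx'
      refine ⟨?_, ?_, ?_⟩
      · rw [map_add, map_smul, map_smul, hx1, hx1', ← add_smul, hab, one_smul]
      · have hxt : f x ≠ ⊤ := (hx2.trans_lt (EReal.coe_lt_top _)).ne
        have hxt' : f x' ≠ ⊤ := (hx2'.trans_lt (EReal.coe_lt_top _)).ne
        obtain ⟨rx, hrx⟩ := ereal_real (hbot x) hxt
        obtain ⟨rx', hrx'⟩ := ereal_real (hbot x') hxt'
        have k1 : rx ≤ α + 1 / (m + 1) := by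
          rw [hrx] at hx2; exact EReal.coe_le_coe_iff.mp hx2
        have k2 : rx' ≤ α + 1 / (m + 1) := by
          rw [hrx'] at hx2'; exact EReal.coe_le_coe_iff.mp hx2'
        calc f (a • x + b • x') ≤ (a : EReal) * f x + (b : EReal) * f x' :=
              hfconv x x' a b ha hb hab
          _ = ((a * rx + b * rx' : ℝ) : EReal) := by rw [hrx, hrx']; push_cast; ring
          _ ≤ ((α + 1 / (m + 1) : ℝ) : EReal) := by
              apply EReal.coe_le_coe_iff.mpr
              have hcc : a * (α + 1 / (m + 1)) + b * (α + 1 / (m + 1)) = α + 1 / (m + 1) := by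
                rw [← add_mul, hab, one_mul]
              linarith [mul_le_mul_of_nonneg_left k1 ha, mul_le_mul_of_nonneg_left k2 hb]
      · calc ‖a • x + b • x'‖ ≤ ‖a • x‖ + ‖b • x'‖ := norm_add_le _ _
          _ = a * ‖x‖ + b * ‖x'‖ := by
              rw [norm_smul, norm_smul, Real.norm_eq_abs, Real.norm_eq_abs,
                abs_of_nonneg ha, abs_of_nonneg hb]
          _ ≤ R := by
              have hRR : a * R + b * R = R := by rw [← add_mul, hab, one_mul]
              linarith [mul_le_mul_of_nonneg_left hx3 ha, mul_le_mul_of_nonneg_left hx3' hb]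
    have hAanti : ∀ m n : ℕ, m ≤ n → A n ⊆ A m := by
      intro m n hmn x hx
      obtain ⟨h1, h2, h3⟩ := hx
      refine ⟨h1, h2.trans ?_, h3⟩
      apply EReal.coe_le_coe_iff.mpr
      have : 1 / ((n : ℝ) + 1) ≤ 1 / ((m : ℝ) + 1) := by
        apply one_div_le_one_div_of_le (by positivity)
        have := (Nat.cast_le (α := ℝ)).mpr hmn
        linarith
      linarith
    have hAbd : ∀ m, ∀ x ∈ A m, ‖x‖ ≤ R := fun m x hx => hx.2.2
    obtain ⟨xs, hxs⟩ := nested_inter hAne hAcl hAcv hAanti R hAbd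
    rw [Set.mem_iInter] at hxs
    have hLxs : L xs = y := (hxs 0).1
    have hfxs_le : f xs ≤ (α : EReal) := by
      by_contra hgt
      push_neg at hgt
      have hxst : f xs ≠ ⊤ := by
        have := (hxs 0).2.1
        exact (this.trans_lt (EReal.coe_lt_top _)).ne
      obtain ⟨rx, hrx⟩ := ereal_real (hbot xs) hxst
      rw [hrx] at hgt
      have hαrx : α < rx := EReal.coe_lt_coe_iff.mp hgt
      obtain ⟨m, hm⟩ := exists_nat_one_div_lt (show (0:ℝ) < rx - α by linarith)
      have := (hxs m).2.1
      rw [hrx] at this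
      have h2 : rx ≤ α + 1 / ((m : ℝ) + 1) := EReal.coe_le_coe_iff.mp this
      have h3 : 1 / ((m : ℝ) + 1) < rx - α := hm
      linarith
    have hfxs : f xs = (α : EReal) := le_antisymm hfxs_le (hαle xs hLxs)
    refine ⟨xs, ?_, hLxs⟩
    intro z
    rcases eq_or_ne (f z) ⊤ with ht | ht
    · rw [ht]; exact le_top
    · obtain ⟨rz, hrz⟩ := ereal_real (hbot z) ht
      have h9 : ⟪z, L' v⟫ - rz ≤ ⟪y, v⟫ - α := FYreal z (L' v) rz _ hrz hconjv.le
      rw [hfxs, hrz, ← EReal.coe_add]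
      apply EReal.coe_le_coe_iff.mpr
      have h10 : ⟪z - xs, L' v⟫ = ⟪z, L' v⟫ - ⟪xs, L' v⟫ := inner_sub_left _ _ _
      have h11 : ⟪xs, L' v⟫ = ⟪y, v⟫ := by rw [adj, hLxs]
      linarith
  · -- easy direction
    rintro ⟨xh, hxhsub, hxhL⟩
    intro z
    have hfxh : f xh ≠ ⊤ := by
      intro htop
      have h1 := hxhsub x₁
      rw [htop, EReal.top_add_coe] at h1
      exact hx₁ (top_le_iff.mp h1)
    apply le_iInf
    rintro ⟨x', hx'⟩
    have h2 : ⟪x' - xh, L' v⟫ = ⟪z - y, v⟫ := by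
      rw [adj, map_sub, hx', hxhL]
    calc infPost L f y + ((⟪z - y, v⟫ : ℝ) : EReal)
        ≤ f xh + ((⟪z - y, v⟫ : ℝ) : EReal) :=
          add_le_add_left (hiInf_le y xh hxhL) _
      _ = f xh + ((⟪x' - xh, L' v⟫ : ℝ) : EReal) := by rw [h2]
      _ ≤ f x' := hxhsub x'
end
end

section
/- Let H, G, K be real Hilbert spaces, A : H → 2^H, B : G → 2^G, D : K → 2^K set-valued operators, C : H → H, L : H → G, M : H → K bounded linear, z ∈ H. Suppose x̄, ȳ ∈ H, v̄ ∈ G, w̄ ∈ K satisfy: z − L*v̄ ∈ Ax̄ + Cx̄, L*v̄ = M*w̄, Lx̄ − Lȳ ∈ B⁻¹v̄, and Mȳ ∈ D⁻¹w̄. Then 0 ∈ −L((A + C)⁻¹(z − L*v̄)) + B⁻¹v̄ + L((M* ▷ D⁻¹)(L*v̄)), i.e., v̄ solves the dual inclusion. -/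
open scoped Pointwise RealInnerProductSpace

noncomputable section

/-- the auxiliary system solution yields a solution of the dual
inclusion (case `r = 1` of Proposition 2.5(ii)). -/
theorem auxiliary_to_dual {H G K : Type*}
    [NormedAddCommGroup H] [InnerProductSpace ℝ H] [CompleteSpace H]
    [NormedAddCommGroup G] [InnerProductSpace ℝ G] [CompleteSpace G]
    [NormedAddCommGroup K] [InnerProductSpace ℝ K] [CompleteSpace K]
    (A : H → Set H) (B : G → Set G) (D : K → Set K) (C : H → H)
    (L : H →L[ℝ] G) (M : H →L[ℝ] K) (z : H)
    (xb yb : H) (vb : G) (wb : K)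
    (h1 : z - ContinuousLinearMap.adjoint L vb ∈ A xb + {C xb})
    (h2 : ContinuousLinearMap.adjoint L vb = ContinuousLinearMap.adjoint M wb)
    (h3 : L xb - L yb ∈ SVInv B vb)
    (h4 : M yb ∈ SVInv D wb) :
    (0 : G) ∈
      -(L '' SVInv (fun u => A u + {C u}) (z - ContinuousLinearMap.adjoint L vb)) +
      SVInv B vb +
      L '' SVInv (fun u => ContinuousLinearMap.adjoint M '' D (M u))
        (ContinuousLinearMap.adjoint L vb) := by
  have hx : L xb ∈ L '' SVInv (fun u => A u + {C u}) (z - ContinuousLinearMap.adjoint L vb) :=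
    ⟨xb, h1, rfl⟩
  have hy : L yb ∈ L '' SVInv (fun u => ContinuousLinearMap.adjoint M '' D (M u))
      (ContinuousLinearMap.adjoint L vb) := ⟨yb, ⟨wb, h4, h2.symm⟩, rfl⟩
  have h := Set.add_mem_add (Set.add_mem_add (Set.neg_mem_neg.2 hx) h3) hy
  have : -L xb + (L xb - L yb) + L yb = 0 := by abel
  rwa [this] at h
end
end
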